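/- Let G be a finite group, M ⊴ G, and suppose M is a p-group for a prime p, M ≤ Z(K) for some subgroup M ≤ K ⊴ G, and suppose that for every subgroup M < K̃ ⊴ K with K̃/M simple, the subgroup M has a normal complement in K̃ (K̃ = M × C for some C ⊴ K̃). If K/M is a direct product of non-abelian simple groups, then M has a normal complement C in K with C = O^p(K); in particular K = M × O^p(K) and O^p(K) is normal in G. -/

import Mathlib

open scoped commutatorElement

lemma aux_perfect_trivial {H : Type*} [Group H] [Finite H] {p : ℕ} (hp : Fact p.Prime)
    (hH : IsPGroup p H) (hperf : ⁅(⊤ : Subgroup H), (⊤ : Subgroup H)⁆ = ⊤) :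
    ∀ x : H, x = 1 := by
  haveI := hp
  haveI := hH.isNilpotent
  obtain ⟨n, hn⟩ := nilpotent_iff_lowerCentralSeries.mp this
  have htop : ∀ m, Subgroup.lowerCentralSeries (⊤ : Subgroup H) m = ⊤ := by
    intro m
    induction m with
    | zero => rfl
    | succ k ih =>
      have h1 : Subgroup.lowerCentralSeries (⊤ : Subgroup H) (k+1) = ⁅Subgroup.lowerCentralSeries (⊤ : Subgroup H) k, (⊤ : Subgroup H)⁆ := rfl
      rw [h1, ih, hperf]
  intro x
  have : x ∈ Subgroup.lowerCentralSeries (⊤ : Subgroup H) n := (htop n).symm ▸ Subgroup.mem_top x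
  rw [hn] at this
  exact Subgroup.mem_bot.mp this

theorem stmt15 (G : Type) [Group G] [Fintype G] (p : ℕ) (hp : p.Prime)
    (K M : Subgroup G) [K.Normal] [M.Normal]
    (hMK : M ≤ K) (hMp : IsPGroup p M)
    (hcentral : ∀ m ∈ M, ∀ k ∈ K, m * k = k * m)
    (hcomp : ∀ K' : Subgroup G, K' ≤ K → M < K' → (K'.subgroupOf K).Normal →
      IsSimpleGroup (↥K' ⧸ (M.subgroupOf K')) →
      ∃ C : Subgroup G, C ≤ K' ∧ (C.subgroupOf K').Normal ∧ M ⊓ C = ⊥ ∧ M ⊔ C = K')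
    (hquot : ∃ (ι : Type) (_ : Fintype ι) (_ : DecidableEq ι) (S : ι → Subgroup (↥K ⧸ (M.subgroupOf K))),
      (∀ i, IsSimpleGroup (S i)) ∧ (∀ i, ∃ a b : (S i), a * b ≠ b * a) ∧
      ∃ e : ((i : ι) → (S i)) ≃* (↥K ⧸ (M.subgroupOf K)),
        ∀ (i : ι) (x : (S i)), e (Pi.mulSingle i x) = (x : ↥K ⧸ (M.subgroupOf K))) :
    ∃ C : Subgroup G, C ≤ K ∧ (C.subgroupOf K).Normal ∧ C.Normal ∧
      M ⊓ C = ⊥ ∧ M ⊔ C = K ∧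
      (∃ k : ℕ, (C.subgroupOf K).index = p ^ k) ∧
      (∀ N : Subgroup G, N ≤ K → (N.subgroupOf K).Normal →
        (∃ k : ℕ, (N.subgroupOf K).index = p ^ k) → C ≤ N) := by
  classical
  haveI : Fact p.Prime := ⟨hp⟩
  obtain ⟨ι, _, _, S, hS, hSnc, e, he⟩ := hquot
  set M' := M.subgroupOf K with hM'def
  let π : ↥K →* ↥K ⧸ M' := QuotientGroup.mk' M'
  have hπs : Function.Surjective π := QuotientGroup.mk'_surjective M'
  have hπker : π.ker = M' := QuotientGroup.ker_mk' M'
  -- each S i is normal in the quotient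
  have hSnormal : ∀ i, (S i).Normal := by
    intro i
    constructor
    intro s hs q
    obtain ⟨f, rfl⟩ := e.surjective q
    have h1 : s = e (Pi.mulSingle i ⟨s, hs⟩) := (he i ⟨s, hs⟩).symm
    have key : f * Pi.mulSingle i (⟨s, hs⟩ : ↥(S i)) * f⁻¹
        = Pi.mulSingle i (f i * ⟨s, hs⟩ * (f i)⁻¹) := by
      funext j
      by_cases hj : j = i
      · subst hj; simp
      · simp [Pi.mulSingle_eq_of_ne hj]
    rw [h1, ← map_inv, ← map_mul, ← map_mul, key, he]
    exact SetLike.coe_mem _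
  -- the subgroups K_i
  let K' : ι → Subgroup ↥K := fun i => Subgroup.comap π (S i)
  let KG : ι → Subgroup G := fun i => Subgroup.map K.subtype (K' i)
  have hKGle : ∀ i, KG i ≤ K := fun i => Subgroup.map_subtype_le _
  have hKG' : ∀ i, (KG i).subgroupOf K = K' i := fun i =>
    Subgroup.comap_map_eq_self_of_injective K.subtype_injective _
  have hMle : ∀ i, M ≤ KG i := by
    intro i m hm
    have h0 : π ⟨m, hMK hm⟩ = 1 := (QuotientGroup.eq_one_iff _).mpr hm
    refine ⟨⟨m, hMK hm⟩, ?_, rfl⟩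
    have : (⟨m, hMK hm⟩ : ↥K) ∈ K' i := by
      rw [Subgroup.mem_comap, h0]; exact (S i).one_mem
    exact this
  have hMlt : ∀ i, M < KG i := by
    intro i
    refine lt_of_le_of_ne (hMle i) ?_
    intro hEq
    haveI := hS i
    obtain ⟨s, hs1⟩ := exists_ne (1 : ↥(S i))
    obtain ⟨x, hx⟩ := hπs ↑s
    have hxK : (↑x : G) ∈ KG i := ⟨x, by simp [K', Subgroup.mem_comap, hx], rfl⟩
    rw [← hEq] at hxK
    have hx1 : π x = 1 := (QuotientGroup.eq_one_iff _).mpr hxK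
    rw [hx] at hx1
    exact hs1 (Subtype.ext hx1)
  have hKGnormal : ∀ i, ((KG i).subgroupOf K).Normal := by
    intro i
    rw [hKG']
    exact (hSnormal i).comap π
  -- simple quotients
  have hsimple : ∀ i, IsSimpleGroup (↥(KG i) ⧸ (M.subgroupOf (KG i))) := by
    intro i
    haveI := hS i
    let εi := Subgroup.equivMapOfInjective (K' i) K.subtype K.subtype_injective
    let ρ : ↥(K' i) →* ↥(S i) := (π.domRestrict (K' i)).codRestrict (S i) (fun x => x.2)
    let ψ : ↥(KG i) →* ↥(S i) := ρ.comp εi.symm.toMonoidHom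
    have hco : ∀ y : ↥(K' i), ((εi y : ↥(KG i)) : G) = ((y : ↥K) : G) := fun y =>
      Subgroup.coe_equivMapOfInjective_apply _ _ _ y
    have hco2 : ∀ x : ↥(KG i), (((εi.symm x : ↥(K' i)) : ↥K) : G) = (x : G) := by
      intro x
      have := hco (εi.symm x)
      rw [εi.apply_symm_apply] at this
      exact this.symm
    have hψs : Function.Surjective ψ := by
      intro s
      obtain ⟨x, hx⟩ := hπs ↑s
      have hxK : x ∈ K' i := by simp [K', Subgroup.mem_comap, hx]
      refine ⟨εi ⟨x, hxK⟩, ?_⟩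
      have : εi.symm (εi ⟨x, hxK⟩) = ⟨x, hxK⟩ := εi.symm_apply_apply _
      simp only [ψ, MonoidHom.comp_apply, MulEquiv.coe_toMonoidHom, this]
      exact Subtype.ext hx
    have hker : ψ.ker = M.subgroupOf (KG i) := by
      ext x
      have h1 : ψ x = 1 ↔ π ↑(εi.symm x) = 1 := by
        constructor
        · intro h; exact congrArg Subtype.val h
        · intro h; exact Subtype.ext h
      have h2 : π ↑(εi.symm x) = 1 ↔ (↑(εi.symm x) : ↥K) ∈ M' := QuotientGroup.eq_one_iff _
      rw [MonoidHom.mem_ker, h1, h2, hM'def, Subgroup.mem_subgroupOf, Subgroup.mem_subgroupOf, hco2]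
    have hiso := (QuotientGroup.quotientKerEquivOfSurjective ψ hψs).symm.trans
      (QuotientGroup.quotientMulEquivOfEq hker)
    haveI : Nontrivial (↥(KG i) ⧸ M.subgroupOf (KG i)) := hiso.symm.toEquiv.nontrivial
    exact IsSimpleGroup.isSimpleGroup_of_surjective hiso.toMonoidHom hiso.surjective
  -- apply the hypothesis
  choose C hCle hCnormal hCinf hCsup using fun i =>
    hcomp (KG i) (hKGle i) (hMlt i) (hKGnormal i) (hsimple i)
  let C' : ι → Subgroup ↥K := fun i => (C i).subgroupOf K
  have hCleK : ∀ i, C i ≤ K := fun i => (hCle i).trans (hKGle i)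
  have hCleK' : ∀ i, C' i ≤ K' i := by
    intro i x hx
    have hx' : (↑x : G) ∈ KG i := hCle i hx
    obtain ⟨y, hy, hyx⟩ := hx'
    have : y = x := Subtype.ext hyx
    rwa [this] at hy
  -- the maps θ i : C' i → S i
  let θ : ∀ i, ↥(C' i) →* ↥(S i) := fun i =>
    ((π.domRestrict (C' i)).codRestrict (S i) (fun x => hCleK' i x.2))
  have hθcoe : ∀ i (x : ↥(C' i)), ((θ i x : ↥(S i)) : ↥K ⧸ M') = π ↑x := fun i x => rfl
  have hθinj : ∀ i, Function.Injective (θ i) := by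
    intro i
    rw [injective_iff_map_eq_one]
    intro a ha
    have h1 : π ↑a = 1 := by rw [← hθcoe i a, ha]; rfl
    have h2 : (↑a : ↥K) ∈ M' := (QuotientGroup.eq_one_iff _).mp h1
    have h3 : ((↑a : ↥K) : G) ∈ M ⊓ C i := ⟨h2, a.2⟩
    rw [hCinf i, Subgroup.mem_bot] at h3
    exact Subtype.ext (Subtype.ext h3)
  have hmapM : Subgroup.map π M' = ⊥ := by
    rw [eq_bot_iff]
    rintro _ ⟨x, hx, rfl⟩
    rw [Subgroup.mem_bot]
    exact (QuotientGroup.eq_one_iff _).mpr hx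
  have hmapC : ∀ i, Subgroup.map π (C' i) = S i := by
    intro i
    have h1 : (KG i).subgroupOf K = M' ⊔ C' i := by
      conv_lhs => rw [← hCsup i]
      rw [hM'def]
      exact Subgroup.subgroupOf_sup hMK (hCleK i)
    have h2 : Subgroup.map π (K' i) = S i :=
      Subgroup.map_comap_eq_self_of_surjective hπs _
    rw [← h2, ← hKG', h1, Subgroup.map_sup, hmapM, bot_sup_eq]
  have hθsurj : ∀ i, Function.Surjective (θ i) := by
    intro i s
    have : (↑s : ↥K ⧸ M') ∈ Subgroup.map π (C' i) := by rw [hmapC i]; exact s.2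
    obtain ⟨x, hx, hxs⟩ := this
    exact ⟨⟨x, hx⟩, Subtype.ext hxs⟩
  let θe : ∀ i, ↥(C' i) ≃* ↥(S i) := fun i => MulEquiv.ofBijective (θ i) ⟨hθinj i, hθsurj i⟩
  -- perfectness of the S i and C' i
  have hSperf : ∀ i, ⁅(⊤ : Subgroup ↥(S i)), (⊤ : Subgroup ↥(S i))⁆ = ⊤ := by
    intro i
    haveI := hS i
    rcases Subgroup.Normal.eq_bot_or_eq_top
      (Subgroup.commutator_normal (⊤ : Subgroup ↥(S i)) ⊤) with h | h
    · obtain ⟨a, b, hab⟩ := hSnc i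
      exfalso
      apply hab
      have : ⁅a, b⁆ ∈ (⊥ : Subgroup ↥(S i)) :=
        h ▸ Subgroup.commutator_mem_commutator (Subgroup.mem_top a) (Subgroup.mem_top b)
      rwa [Subgroup.mem_bot, commutatorElement_eq_one_iff_mul_comm] at this
    · exact h
  have hC'perf : ∀ i, ⁅(⊤ : Subgroup ↥(C' i)), (⊤ : Subgroup ↥(C' i))⁆ = ⊤ := by
    intro i
    apply Subgroup.map_injective (θe i).injective
    rw [Subgroup.map_commutator]
    rw [Subgroup.map_top_of_surjective _ (θe i).surjective, hSperf i]
  have hmapsub : ∀ i, Subgroup.map K.subtype (C' i) = C i := fun i => by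
    rw [Subgroup.subgroupOf_map_subtype, inf_of_le_left (hCleK i)]
  have hC'perf2 : ∀ i, ⁅C' i, C' i⁆ = C' i := by
    intro i
    have htop : Subgroup.map (C' i).subtype ⊤ = C' i := by
      rw [← MonoidHom.range_eq_map, Subgroup.range_subtype]
    calc ⁅C' i, C' i⁆ = ⁅Subgroup.map (C' i).subtype ⊤, Subgroup.map (C' i).subtype ⊤⁆ := by
          rw [htop]
      _ = Subgroup.map (C' i).subtype ⁅⊤, ⊤⁆ := (Subgroup.map_commutator _ _ _).symm
      _ = Subgroup.map (C' i).subtype ⊤ := by rw [hC'perf i]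
      _ = C' i := htop
  have hCperf : ∀ i, ⁅C i, C i⁆ = C i := by
    intro i
    calc ⁅C i, C i⁆ = ⁅Subgroup.map K.subtype (C' i), Subgroup.map K.subtype (C' i)⁆ := by
          rw [hmapsub i]
      _ = Subgroup.map K.subtype ⁅C' i, C' i⁆ := (Subgroup.map_commutator _ _ _).symm
      _ = Subgroup.map K.subtype (C' i) := by rw [hC'perf2 i]
      _ = C i := hmapsub i
  -- centrality helper inside K
  have hMcent : ∀ (m x : ↥K), (↑m : G) ∈ M → m * x = x * m := by
    intro m x hm
    exact Subtype.ext (hcentral ↑m hm ↑x x.2)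
  -- elements of distinct C' i commute
  have hcommC : ∀ i j, i ≠ j → ∀ (a : ↥(C' i)) (b : ↥(C' j)),
      Commute ((a : ↥K)) ((b : ↥K)) := by
    intro i j hij a b
    have hstep : ∀ (x : ↥(C' i)), (⁅(x : ↥K), (b : ↥K)⁆ : ↥K) ∈ M' := by
      intro x
      have h2 : Commute (π ↑x) (π ↑b) := by
        have hx : π ↑x = e (Pi.mulSingle i (θ i x)) := by rw [he]; rfl
        have hb : π ↑b = e (Pi.mulSingle j (θ j b)) := by rw [he]; rfl
        rw [hx, hb]
        exact (Pi.mulSingle_commute hij _ _).map e.toMonoidHom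
      have h3 : π ⁅(x : ↥K), (b : ↥K)⁆ = 1 := by
        rw [map_commutatorElement]
        exact commutatorElement_eq_one_iff_commute.mpr h2
      exact (QuotientGroup.eq_one_iff _).mp h3
    let χ : ↥(C' i) →* ↥K :=
      { toFun := fun x => ⁅(x : ↥K), (b : ↥K)⁆
        map_one' := by simp
        map_mul' := by
          intro x y
          show ⁅((x * y : ↥(C' i)) : ↥K), (b : ↥K)⁆
              = ⁅(x : ↥K), (b : ↥K)⁆ * ⁅(y : ↥K), (b : ↥K)⁆
          have hz : (⁅(y : ↥K), (b : ↥K)⁆ : ↥K) ∈ M' := hstep y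
          have key : ⁅((x * y : ↥(C' i)) : ↥K), (b : ↥K)⁆
              = (x : ↥K) * ⁅(y : ↥K), (b : ↥K)⁆ * (x : ↥K)⁻¹ * ⁅(x : ↥K), (b : ↥K)⁆ := by
            push_cast
            group
          rw [key, ← hMcent _ _ (Subgroup.mem_subgroupOf.mp hz)]
          have key2 : (⁅(y : ↥K), (b : ↥K)⁆ : ↥K) * ↑x * (↑x)⁻¹ * ⁅(x : ↥K), (b : ↥K)⁆
              = ⁅(y : ↥K), (b : ↥K)⁆ * ⁅(x : ↥K), (b : ↥K)⁆ := by group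
          rw [key2, hMcent _ _ (Subgroup.mem_subgroupOf.mp hz)] }
    have hχ1 : ∀ x, χ x = 1 := by
      have h1 : Subgroup.map χ ⊤ = ⁅Subgroup.map χ ⊤, Subgroup.map χ ⊤⁆ := by
        conv_lhs => rw [← hC'perf i]
        rw [Subgroup.map_commutator]
      have h2 : ⁅Subgroup.map χ ⊤, Subgroup.map χ ⊤⁆ ≤ ⊥ := by
        rw [Subgroup.commutator_le]
        rintro _ ⟨x, -, rfl⟩ _ ⟨y, -, rfl⟩
        rw [Subgroup.mem_bot, commutatorElement_eq_one_iff_mul_comm]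
        exact hMcent _ _ (Subgroup.mem_subgroupOf.mp (hstep x))
      intro x
      have hx : χ x ∈ Subgroup.map χ ⊤ := ⟨x, trivial, rfl⟩
      rw [h1] at hx
      exact Subgroup.mem_bot.mp (h2 hx)
    have := hχ1 a
    exact commutatorElement_eq_one_iff_commute.mp this
  -- the big product map
  have hcomm' : Pairwise fun i j => ∀ (x : ↥(C' i)) (y : ↥(C' j)),
      Commute ((C' i).subtype x) ((C' j).subtype y) := fun i j hij x y => hcommC i j hij x y
  let Φ : (∀ i, ↥(C' i)) →* ↥K := MonoidHom.noncommPiCoprod (fun i => (C' i).subtype) hcomm'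
  have hΦrange : Φ.range = ⨆ i, C' i := by
    rw [MonoidHom.noncommPiCoprod_range]
    exact iSup_congr fun i => Subgroup.range_subtype _
  let Θ : (∀ i, ↥(C' i)) →* (∀ i, ↥(S i)) :=
    MonoidHom.mk' (fun f i => θ i (f i)) (by intro f g; funext i; simp)
  have hΘsingle : ∀ i (x : ↥(C' i)), Θ (Pi.mulSingle i x) = Pi.mulSingle i (θ i x) := by
    intro i x
    funext j
    by_cases hj : j = i
    · subst hj; simp [Θ]
    · simp only [Θ, MonoidHom.mk'_apply, Pi.mulSingle_eq_of_ne hj, map_one]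
  have hkey : ∀ f, π (Φ f) = e (Θ f) := by
    have heq : π.comp Φ = e.toMonoidHom.comp Θ := by
      apply MonoidHom.pi_ext
      intro i x
      rw [MonoidHom.comp_apply, MonoidHom.comp_apply, hΘsingle, MulEquiv.coe_toMonoidHom, he]
      show π (Φ (Pi.mulSingle i x)) = ((θ i x : ↥(S i)) : ↥K ⧸ M')
      rw [show Φ (Pi.mulSingle i x) = (C' i).subtype x from
        MonoidHom.noncommPiCoprod_mulSingle _ _ _]
      exact (hθcoe i x).symm
    intro f
    exact DFunLike.congr_fun heq f
  have hΘinj : Function.Injective Θ := by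
    intro f g hfg
    funext i
    exact hθinj i (congrFun hfg i)
  have hMinf' : M' ⊓ (⨆ i, C' i) = ⊥ := by
    rw [eq_bot_iff]
    rintro x ⟨hxM, hxD⟩
    rw [← hΦrange] at hxD
    obtain ⟨f, rfl⟩ := hxD
    have h1 : π (Φ f) = 1 := (QuotientGroup.eq_one_iff _).mpr hxM
    have h2 : e (Θ f) = 1 := by rw [← hkey f, h1]
    have h3 : Θ f = 1 := by
      apply e.injective
      rw [h2, map_one]
    have h4 : f = 1 := hΘinj (by rw [h3, map_one])
    rw [h4, map_one]
    exact Subgroup.mem_bot.mpr rfl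
  -- the supremum is everything
  have hSisup : (⨆ i, S i) = ⊤ := by
    rw [eq_top_iff]
    rintro q -
    obtain ⟨f, rfl⟩ := e.surjective q
    rw [← Finset.noncommProd_mulSingle f]
    erw [Finset.univ.map_noncommProd _ _ e]
    apply Subgroup.noncommProd_mem
    intro i _
    rw [he]
    exact Subgroup.mem_iSup_of_mem i (SetLike.coe_mem _)
  have hsup' : M' ⊔ (⨆ i, C' i) = ⊤ := by
    have h1 : Subgroup.map π (M' ⊔ ⨆ i, C' i) = ⊤ := by
      rw [Subgroup.map_sup, Subgroup.map_iSup, hmapM, bot_sup_eq]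
      rw [iSup_congr hmapC]
      exact hSisup
    have h2 := Subgroup.comap_map_eq π (M' ⊔ ⨆ i, C' i)
    rw [h1, hπker, Subgroup.comap_top] at h2
    have h3 : ((M' ⊔ ⨆ i, C' i) ⊔ M') = M' ⊔ ⨆ i, C' i := by
      rw [sup_comm, ← sup_assoc, sup_idem]
    rw [← h3, ← h2]
  -- the candidate complement at G level
  let D : Subgroup G := ⨆ i, C i
  have hDK : D ≤ K := iSup_le hCleK
  have hmapD : Subgroup.map K.subtype (⨆ i, C' i) = D := by
    rw [Subgroup.map_iSup]
    exact iSup_congr hmapsub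
  have hD' : D.subgroupOf K = ⨆ i, C' i := by
    conv_lhs => rw [← hmapD]
    exact Subgroup.comap_map_eq_self_of_injective K.subtype_injective _
  have hMDinf : M ⊓ D = ⊥ := by
    have h1 : (M ⊓ D).subgroupOf K = ⊥ := by
      rw [Subgroup.subgroupOf, Subgroup.comap_inf, ← Subgroup.subgroupOf,
        ← Subgroup.subgroupOf, ← hM'def, hD', hMinf']
    have h2 := Subgroup.subgroupOf_map_subtype (M ⊓ D) K
    rw [h1, Subgroup.map_bot,
      inf_of_le_left ((inf_le_right.trans hDK : M ⊓ D ≤ K))] at h2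
    exact h2.symm
  have hMDsup : M ⊔ D = K := by
    have h2 := congrArg (Subgroup.map K.subtype) hsup'
    rw [Subgroup.map_sup, hmapD, ← MonoidHom.range_eq_map, Subgroup.range_subtype] at h2
    have h3 : Subgroup.map K.subtype M' = M := by
      rw [hM'def, Subgroup.subgroupOf_map_subtype, inf_of_le_left hMK]
    rw [h3] at h2
    exact h2
  -- D is the commutator subgroup of K
  have hDcomm : D = ⁅K, K⁆ := by
    apply le_antisymm
    · exact iSup_le fun i => (hCperf i) ▸ Subgroup.commutator_mono (hCleK i) (hCleK i)
    · rw [Subgroup.commutator_le]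
      intro k1 hk1 k2 hk2
      have habs : ∀ m d x : G, m ∈ M → d ∈ K → x ∈ K → ⁅m * d, x⁆ = ⁅d, x⁆ := by
        intro m d x hm hd hx
        have h1 : m * (d * x * d⁻¹) = (d * x * d⁻¹) * m :=
          hcentral m hm _ (mul_mem (mul_mem hd hx) (inv_mem hd))
        have h2 : m * (d * x * d⁻¹) * m⁻¹ = d * x * d⁻¹ := by rw [h1]; group
        calc ⁅m * d, x⁆ = m * (d * x * d⁻¹) * m⁻¹ * (x⁻¹) := by
              rw [commutatorElement_def]; group
          _ = d * x * d⁻¹ * x⁻¹ := by rw [h2]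
          _ = ⁅d, x⁆ := by rw [commutatorElement_def]
      have hk1' : k1 ∈ (↑(M ⊔ D) : Set G) := by rw [hMDsup]; exact hk1
      have hk2' : k2 ∈ (↑(M ⊔ D) : Set G) := by rw [hMDsup]; exact hk2
      rw [Subgroup.normal_mul] at hk1' hk2'
      obtain ⟨m1, hm1, d1, hd1, rfl⟩ := hk1'
      obtain ⟨m2, hm2, d2, hd2, rfl⟩ := hk2'
      have hd1K : d1 ∈ K := hDK hd1
      have hd2K : d2 ∈ K := hDK hd2
      have e1 : ⁅m1 * d1, m2 * d2⁆ = ⁅d1, m2 * d2⁆ :=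
        habs m1 d1 (m2 * d2) hm1 hd1K (mul_mem (hMK hm2) hd2K)
      have e2 : ⁅d1, m2 * d2⁆ = ⁅d2, d1⁆⁻¹ := by
        rw [← commutatorElement_inv, habs m2 d2 d1 hm2 hd2K hd1K]
      rw [e1, e2]
      apply Subgroup.inv_mem
      rw [commutatorElement_def]
      exact Subgroup.mul_mem _ (Subgroup.mul_mem _ (Subgroup.mul_mem _ hd2 hd1)
        (Subgroup.inv_mem _ hd2)) (Subgroup.inv_mem _ hd1)
  -- normality of D in G
  have hDnormal : D.Normal := by
    rw [hDcomm]
    infer_instance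
  haveI := hDnormal
  have hD'normal : (D.subgroupOf K).Normal := Subgroup.normal_subgroupOf
  haveI := hD'normal
  -- D is perfect
  have hDperf : ⁅D, D⁆ = D := by
    apply le_antisymm
    · rw [Subgroup.commutator_le]
      intro g1 hg1 g2 hg2
      rw [commutatorElement_def]
      exact mul_mem (mul_mem (mul_mem hg1 hg2) (inv_mem hg1)) (inv_mem hg2)
    · exact iSup_le fun i =>
        (hCperf i) ▸ Subgroup.commutator_mono (le_iSup C i) (le_iSup C i)
  have hmapDK : Subgroup.map K.subtype (D.subgroupOf K) = D := by
    rw [Subgroup.subgroupOf_map_subtype, inf_of_le_left hDK]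
  have hD'perf : ⁅D.subgroupOf K, D.subgroupOf K⁆ = D.subgroupOf K := by
    apply Subgroup.map_injective K.subtype_injective
    rw [Subgroup.map_commutator, hmapDK, hDperf]
  have hMD'sup : M' ⊔ D.subgroupOf K = ⊤ := by rw [hD']; exact hsup'
  -- the index is a power of p
  have hindex : ∃ k, (D.subgroupOf K).index = p ^ k := by
    have hsurj : Function.Surjective
        ((QuotientGroup.mk' (D.subgroupOf K)).comp M'.subtype) := by
      intro q
      obtain ⟨x, rfl⟩ := QuotientGroup.mk'_surjective _ q
      have hx : x ∈ (↑(M' ⊔ D.subgroupOf K) : Set ↥K) := by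
        rw [hMD'sup]; trivial
      rw [Subgroup.mul_normal] at hx
      obtain ⟨m, hm, d, hd, rfl⟩ := hx
      refine ⟨⟨m, hm⟩, ?_⟩
      show QuotientGroup.mk' (D.subgroupOf K) m = QuotientGroup.mk' (D.subgroupOf K) (m * d)
      have hd1 : QuotientGroup.mk' (D.subgroupOf K) d = 1 := (QuotientGroup.eq_one_iff d).mpr hd
      rw [map_mul, hd1, mul_one]
    have hMp' : IsPGroup p ↥M' := hMp.of_equiv (Subgroup.subgroupOfEquivOfLe hMK).symm
    have hQp : IsPGroup p (↥K ⧸ D.subgroupOf K) := hMp'.of_surjective _ hsurj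
    obtain ⟨k, hk⟩ := IsPGroup.iff_card.mp hQp
    exact ⟨k, by rw [Subgroup.index_eq_card]; exact hk⟩
  -- minimality
  have hmin : ∀ N : Subgroup G, N ≤ K → (N.subgroupOf K).Normal →
      (∃ k, (N.subgroupOf K).index = p ^ k) → D ≤ N := by
    intro N hNK hNnorm hNidx
    obtain ⟨k, hk⟩ := hNidx
    haveI := hNnorm
    have hQp : IsPGroup p (↥K ⧸ N.subgroupOf K) :=
      IsPGroup.of_card (n := k) (by rw [← Subgroup.index_eq_card]; exact hk)
    set mkN := QuotientGroup.mk' (N.subgroupOf K) with hmkN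
    set P : Subgroup (↥K ⧸ N.subgroupOf K) := Subgroup.map mkN (D.subgroupOf K) with hPdef
    have hPperf : ⁅P, P⁆ = P := by
      rw [hPdef, ← Subgroup.map_commutator, hD'perf]
    have hPperf' : ⁅(⊤ : Subgroup ↥P), (⊤ : Subgroup ↥P)⁆ = ⊤ := by
      apply Subgroup.map_injective P.subtype_injective
      have htop : Subgroup.map P.subtype ⊤ = P := by
        rw [← MonoidHom.range_eq_map, Subgroup.range_subtype]
      rw [Subgroup.map_commutator, htop, hPperf]
    have hPp : IsPGroup p ↥P := hQp.to_subgroup P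
    have htrivial := aux_perfect_trivial ⟨hp⟩ hPp hPperf'
    have hD'N : D.subgroupOf K ≤ N.subgroupOf K := by
      intro x hx
      have hmem : mkN x ∈ P := ⟨x, hx, rfl⟩
      have h1 : (⟨mkN x, hmem⟩ : ↥P) = 1 := htrivial _
      have h2 : mkN x = 1 := congrArg Subtype.val h1
      exact (QuotientGroup.eq_one_iff _).mp h2
    intro g hg
    have hgK : g ∈ K := hDK hg
    exact Subgroup.mem_subgroupOf.mp (hD'N (Subgroup.mem_subgroupOf.mpr hg : (⟨g, hgK⟩ : ↥K) ∈ D.subgroupOf K))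
  exact ⟨D, hDK, hD'normal, hDnormal, hMDinf, hMDsup, hindex, hmin⟩
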